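/- For the first Ding–Helleseth sequence and for j ∈ {0,1}, every a ∈ D_j satisfies S(ξ_N^a) = −η_j^{(N)}. -/

import Mathlib

open Finset

/-- `ξ_N = exp(2πi/N)`, a primitive `N`-th root of unity. -/
noncomputable def DHxi (N : ℕ) : ℂ := Complex.exp (2 * Real.pi * Complex.I / N)

/-- Gauss period: `Σ_{a ∈ D} ξ_N^a`. -/
noncomputable def DHeta (N : ℕ) (D : Finset (ZMod N)) : ℂ := ∑ a ∈ D, DHxi N ^ a.val

/-- Ding–Helleseth generalized cyclotomic class
`D₀ = {g^(2t) x^i : 0 ≤ t ≤ e/2 - 1, i ∈ {0,1}}` in `ZMod (p*q)`, where `e = (p-1)(q-1)/2`. -/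
def DHD0 (p q g x : ℕ) : Finset (ZMod (p * q)) :=
  (Finset.range ((p - 1) * (q - 1) / 4) ×ˢ Finset.range 2).image
    (fun ti => (g : ZMod (p * q)) ^ (2 * ti.1) * (x : ZMod (p * q)) ^ ti.2)

/-- `D₁ = g · D₀`. -/
def DHD1 (p q g x : ℕ) : Finset (ZMod (p * q)) :=
  (DHD0 p q g x).image (fun d => (g : ZMod (p * q)) * d)

/-- `P = {p, 2p, …, (q-1)p}` as a subset of `ZMod (p*q)`. -/
def DHP (p q : ℕ) : Finset (ZMod (p * q)) :=
  (Finset.Icc 1 (q - 1)).image (fun k => ((k * p : ℕ) : ZMod (p * q)))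

/-- `Q = {q, 2q, …, (p-1)q}` as a subset of `ZMod (p*q)`. -/
def DHQ (p q : ℕ) : Finset (ZMod (p * q)) :=
  (Finset.Icc 1 (p - 1)).image (fun k => ((k * q : ℕ) : ZMod (p * q)))

/-- First Ding–Helleseth sequence: `s_i = 1` iff `i mod N ∈ D₁ ∪ P`. -/
def DHs1 (p q g x : ℕ) (i : ℕ) : ℕ :=
  if (i : ZMod (p * q)) ∈ DHD1 p q g x ∪ DHP p q then 1 else 0

/-- Second Ding–Helleseth sequence: `s_i = 1` iff `i mod N ∈ D₁ ∪ Q`. -/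
def DHs2 (p q g x : ℕ) (i : ℕ) : ℕ :=
  if (i : ZMod (p * q)) ∈ DHD1 p q g x ∪ DHQ p q then 1 else 0

/-- Circulant matrix of the first sequence: `a_{i,j} = s_{(i-j) mod N}`. -/
noncomputable def DHA1 (p q g x : ℕ) : Matrix (Fin (p * q)) (Fin (p * q)) ℂ :=
  fun i j => (DHs1 p q g x ((((i : ℕ) : ZMod (p * q)) - ((j : ℕ) : ZMod (p * q))).val) : ℂ)

/-- Circulant matrix of the second sequence: `a_{i,j} = s_{(i-j) mod N}`. -/
noncomputable def DHA2 (p q g x : ℕ) : Matrix (Fin (p * q)) (Fin (p * q)) ℂ :=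
  fun i j => (DHs2 p q g x ((((i : ℕ) : ZMod (p * q)) - ((j : ℕ) : ZMod (p * q))).val) : ℂ)

/-- `S(z) = Σ_{i=0}^{N-1} s_i z^i` for the first sequence. -/
noncomputable def DHSval1 (p q g x : ℕ) (z : ℂ) : ℂ :=
  ∑ i ∈ Finset.range (p * q), (DHs1 p q g x i : ℂ) * z ^ i

/-- `S(z) = Σ_{i=0}^{N-1} s_i z^i` for the second sequence. -/
noncomputable def DHSval2 (p q g x : ℕ) (z : ℂ) : ℂ :=
  ∑ i ∈ Finset.range (p * q), (DHs2 p q g x i : ℂ) * z ^ i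

/-- `S(2) = Σ_{i=0}^{N-1} s_i 2^i` for the first sequence, as a natural number. -/
def DHS2num1 (p q g x : ℕ) : ℕ := ∑ i ∈ Finset.range (p * q), DHs1 p q g x i * 2 ^ i

/-- `S(2) = Σ_{i=0}^{N-1} s_i 2^i` for the second sequence, as a natural number. -/
def DHS2num2 (p q g x : ℕ) : ℕ := ∑ i ∈ Finset.range (p * q), DHs2 p q g x i * 2 ^ i

/-- Nonzero quadratic residues modulo `q`. -/
def DHQR (q : ℕ) [NeZero q] : Finset (ZMod q) :=
  Finset.univ.filter (fun a => a ≠ 0 ∧ ∃ b : ZMod q, b * b = a)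

/-- Quadratic nonresidues modulo `q`. -/
def DHQNR (q : ℕ) [NeZero q] : Finset (ZMod q) :=
  Finset.univ.filter (fun a => a ≠ 0 ∧ ¬∃ b : ZMod q, b * b = a)

/-! ### Auxiliary machinery for the Ding–Helleseth theorem -/

/-- reduction mod `p` -/
def DHpip (p q : ℕ) : ZMod (p * q) →+* ZMod p := ZMod.castHom (dvd_mul_right p q) (ZMod p)
/-- reduction mod `q` -/
def DHpiq (p q : ℕ) : ZMod (p * q) →+* ZMod q := ZMod.castHom (dvd_mul_left q p) (ZMod q)

lemma DH_pow_eq_of_modEq {M : Type*} [Monoid M] {y : M} {d m n : ℕ}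
    (hd : y ^ d = 1) (h : m ≡ n [MOD d]) : y ^ m = y ^ n := by
  conv_lhs => rw [← Nat.div_add_mod m d]
  conv_rhs => rw [← Nat.div_add_mod n d]
  have h' : m % d = n % d := h
  rw [pow_add, pow_add, pow_mul, pow_mul, hd, one_pow, one_pow, h']

lemma DH_g_ne_zero {p : ℕ} [Fact p.Prime] {g : ZMod p} (hg : orderOf g = p - 1)
    (hp1 : 2 ≤ p) : g ≠ 0 := by
  intro h
  have h1 : g ^ (p - 1) = 1 := hg ▸ pow_orderOf_eq_one g
  rw [h, zero_pow (by omega)] at h1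
  exact zero_ne_one h1

/-- In `ZMod p` (p prime), if `g` has order `p-1`, every nonzero element is a power of `g`. -/
lemma DH_gen {p : ℕ} [Fact p.Prime] {g : ZMod p} (hg : orderOf g = p - 1)
    {u : ZMod p} (hu : u ≠ 0) : ∃ s : ℕ, u = g ^ s := by
  have hp1 : 1 < p := (Fact.out : p.Prime).one_lt
  have hgne : g ≠ 0 := DH_g_ne_zero hg (by omega)
  have hgu : IsUnit g := isUnit_iff_ne_zero.mpr hgne
  have hou : orderOf hgu.unit = p - 1 := by
    rw [← orderOf_units, IsUnit.unit_spec, hg]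
  have htop : Subgroup.zpowers hgu.unit = ⊤ := by
    apply Subgroup.eq_top_of_card_eq
    rw [Nat.card_zpowers, hou, Nat.card_eq_fintype_card, ZMod.card_units]
  have huu : IsUnit u := isUnit_iff_ne_zero.mpr hu
  have hmem : huu.unit ∈ Subgroup.zpowers hgu.unit := htop ▸ Subgroup.mem_top _
  rw [← mem_powers_iff_mem_zpowers] at hmem
  obtain ⟨s, hs⟩ := hmem
  refine ⟨s, ?_⟩
  have := congrArg (Units.val) hs
  simpa using this.symm

lemma DH_pow_modEq {q : ℕ} [Fact q.Prime] {g : ZMod q} (hg : orderOf g = q - 1)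
    (hq1 : 2 ≤ q) {m n : ℕ} (h : g ^ m = g ^ n) : m ≡ n [MOD q - 1] := by
  have hgne : g ≠ 0 := DH_g_ne_zero hg hq1
  have hgu : IsUnit g := isUnit_iff_ne_zero.mpr hgne
  have hu : hgu.unit ^ m = hgu.unit ^ n := by
    apply Units.ext
    simpa using h
  have hou : orderOf hgu.unit = q - 1 := by
    rw [← orderOf_units, IsUnit.unit_spec, hg]
  rw [pow_eq_pow_iff_modEq, hou] at hu
  exact hu

lemma DH_inj {p q : ℕ} (hp : Nat.Prime p) (hq : Nat.Prime q) (hne : p ≠ q)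
    {a b : ZMod (p * q)}
    (h1 : DHpip p q a = DHpip p q b) (h2 : DHpiq p q a = DHpiq p q b) :
    a = b := by
  haveI : NeZero (p * q) := ⟨Nat.mul_ne_zero hp.ne_zero hq.ne_zero⟩
  have hco : Nat.Coprime p q := (Nat.coprime_primes hp hq).mpr hne
  set d := a - b with hd
  have h1' : DHpip p q d = 0 := by rw [hd, map_sub, h1, sub_self]
  have h2' : DHpiq p q d = 0 := by rw [hd, map_sub, h2, sub_self]
  have hdval : d = ((d.val : ℕ) : ZMod (p * q)) := by rw [ZMod.natCast_val, ZMod.cast_id]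
  rw [hdval, map_natCast, ZMod.natCast_eq_zero_iff] at h1' h2'
  have hdvd : p * q ∣ d.val := Nat.Coprime.mul_dvd_of_dvd_of_dvd hco h1' h2'
  have hv : d.val = 0 := Nat.eq_zero_of_dvd_of_lt hdvd (ZMod.val_lt d) 
  have hd0 : d = 0 := by rw [hdval, hv, Nat.cast_zero]
  exact sub_eq_zero.mp hd0

section Main

variable {p q g x : ℕ}

lemma DH_repr (hp : Nat.Prime p) (hq : Nat.Prime q) (hpo : Odd p) (hqo : Odd q)
    (hpq : p < q) (hgcd : Nat.gcd (p - 1) (q - 1) = 2)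
    (hgp : orderOf (g : ZMod p) = p - 1) (hgq : orderOf (g : ZMod q) = q - 1)
    (hxp : (x : ZMod p) = (g : ZMod p)) (hxq : (x : ZMod q) = 1)
    (r : ℕ) (hr : r ≤ 1) {c : ZMod (p * q)} {a b : ℕ}
    (ha : DHpip p q c = (g : ZMod p) ^ a) (hb : DHpiq p q c = (g : ZMod q) ^ (2 * b + r)) :
    ∃ t, t < (p - 1) * (q - 1) / 4 ∧ ∃ i, i < 2 ∧
      c = (g : ZMod (p * q)) ^ (2 * t + r) * (x : ZMod (p * q)) ^ i := by
  haveI : Fact p.Prime := ⟨hp⟩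
  haveI : Fact q.Prime := ⟨hq⟩
  obtain ⟨kp, hkp⟩ := hpo
  obtain ⟨kq, hkq⟩ := hqo
  have hp2 := hp.two_le
  have hp3 : 3 ≤ p := by omega
  have hq3 : 3 ≤ q := by omega
  set P2 := (p - 1) / 2 with hP2
  set Q2 := (q - 1) / 2 with hQ2
  have hpe : p - 1 = 2 * P2 := by omega
  have hqe : q - 1 = 2 * Q2 := by omega
  have hco : Nat.Coprime P2 Q2 := by
    have h2 := Nat.gcd_mul_left 2 P2 Q2
    rw [← hpe, ← hqe, hgcd] at h2
    unfold Nat.Coprime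
    omega
  set A := a + 2 * (p - 1) with hA
  set i := (A - r) % 2 with hi
  set m1 := (A - r - i) / 2 with hm1
  obtain ⟨t0, ht1, ht2⟩ := Nat.chineseRemainder hco m1 b
  set t := t0 % (P2 * Q2) with ht
  have hP2pos : 0 < P2 := by omega
  have hQ2pos : 0 < Q2 := by omega
  have h4 : (p - 1) * (q - 1) = 4 * (P2 * Q2) := by rw [hpe, hqe]; ring
  refine ⟨t, ?_, i, by omega, ?_⟩
  · rw [h4, Nat.mul_div_cancel_left _ (by norm_num : (0:ℕ) < 4)]
    exact Nat.mod_lt _ (by positivity)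
  · -- modular equation facts
    have htm : t ≡ t0 [MOD P2 * Q2] := Nat.mod_modEq t0 (P2 * Q2)
    have htP : t ≡ m1 [MOD P2] := ((htm.of_dvd (dvd_mul_right P2 Q2)).trans ht1)
    have htQ : t ≡ b [MOD Q2] := ((htm.of_dvd (dvd_mul_left Q2 P2)).trans ht2)
    have h2tP : 2 * t ≡ 2 * m1 [MOD p - 1] := by rw [hpe]; exact htP.mul_left' 2
    have h2tQ : 2 * t ≡ 2 * b [MOD q - 1] := by rw [hqe]; exact htQ.mul_left' 2
    have hm1e : 2 * m1 = A - r - i := by omega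
    have hmodp : 2 * t + r + i ≡ a [MOD p - 1] := by
      have h1 : 2 * t + r + i ≡ 2 * m1 + r + i [MOD p - 1] :=
        Nat.ModEq.add_right i (Nat.ModEq.add_right r h2tP)
      have h2 : 2 * m1 + r + i = A := by omega
      rw [h2] at h1
      have h3 : a ≡ A [MOD p - 1] := by
        rw [Nat.modEq_iff_dvd' (by omega)]
        exact ⟨2, by omega⟩
      exact h1.trans h3.symm
    have hmodq : 2 * t + r ≡ 2 * b + r [MOD q - 1] := Nat.ModEq.add_right r h2tQ
    -- conclude via injectivity
    have hgp1 : (g : ZMod p) ^ (p - 1) = 1 := hgp ▸ pow_orderOf_eq_one _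
    have hgq1 : (g : ZMod q) ^ (q - 1) = 1 := hgq ▸ pow_orderOf_eq_one _
    apply DH_inj hp hq (by omega)
    · rw [ha, map_mul, map_pow, map_pow, map_natCast, map_natCast, hxp, ← pow_add]
      exact DH_pow_eq_of_modEq hgp1 hmodp.symm
    · rw [hb, map_mul, map_pow, map_pow, map_natCast, map_natCast, hxq, one_pow, mul_one]
      exact DH_pow_eq_of_modEq hgq1 hmodq.symm


lemma DH_D0_iff (hp : Nat.Prime p) (hq : Nat.Prime q) (hpo : Odd p) (hqo : Odd q)
    (hpq : p < q) (hgcd : Nat.gcd (p - 1) (q - 1) = 2)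
    (hgp : orderOf (g : ZMod p) = p - 1) (hgq : orderOf (g : ZMod q) = q - 1)
    (hxp : (x : ZMod p) = (g : ZMod p)) (hxq : (x : ZMod q) = 1)
    (c : ZMod (p * q)) :
    c ∈ DHD0 p q g x ↔ DHpip p q c ≠ 0 ∧ ∃ b : ℕ, DHpiq p q c = (g : ZMod q) ^ (2 * b) := by
  haveI : Fact p.Prime := ⟨hp⟩
  haveI : Fact q.Prime := ⟨hq⟩
  have hp2 := hp.two_le
  have hgnep : (g : ZMod p) ≠ 0 := DH_g_ne_zero hgp hp2
  constructor
  · intro hc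
    rw [DHD0, Finset.mem_image] at hc
    obtain ⟨⟨t, i⟩, _, rfl⟩ := hc
    constructor
    · rw [map_mul, map_pow, map_pow, map_natCast, map_natCast, hxp]
      exact mul_ne_zero (pow_ne_zero _ hgnep) (pow_ne_zero _ hgnep)
    · refine ⟨t, ?_⟩
      rw [map_mul, map_pow, map_pow, map_natCast, map_natCast, hxq, one_pow, mul_one]
  · rintro ⟨h1, b, hb⟩
    obtain ⟨a, ha⟩ := DH_gen hgp h1
    obtain ⟨t, htlt, i, hilt, hc⟩ := DH_repr hp hq hpo hqo hpq hgcd hgp hgq hxp hxq 0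
      (by omega) ha (b := b) (by rw [hb, Nat.add_zero])
    rw [DHD0, Finset.mem_image]
    exact ⟨(t, i), by simp [Finset.mem_product, htlt, hilt], by rw [hc]; norm_num⟩

lemma DH_D1_alt : DHD1 p q g x =
    (Finset.range ((p - 1) * (q - 1) / 4) ×ˢ Finset.range 2).image
      (fun ti => (g : ZMod (p * q)) ^ (2 * ti.1 + 1) * (x : ZMod (p * q)) ^ ti.2) := by
  rw [DHD1, DHD0, Finset.image_image]
  congr 1
  funext ti
  simp only [Function.comp_apply]
  ring

lemma DH_D1_iff (hp : Nat.Prime p) (hq : Nat.Prime q) (hpo : Odd p) (hqo : Odd q)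
    (hpq : p < q) (hgcd : Nat.gcd (p - 1) (q - 1) = 2)
    (hgp : orderOf (g : ZMod p) = p - 1) (hgq : orderOf (g : ZMod q) = q - 1)
    (hxp : (x : ZMod p) = (g : ZMod p)) (hxq : (x : ZMod q) = 1)
    (c : ZMod (p * q)) :
    c ∈ DHD1 p q g x ↔ DHpip p q c ≠ 0 ∧ ∃ b : ℕ, DHpiq p q c = (g : ZMod q) ^ (2 * b + 1) := by
  haveI : Fact p.Prime := ⟨hp⟩
  haveI : Fact q.Prime := ⟨hq⟩
  have hp2 := hp.two_le
  have hgnep : (g : ZMod p) ≠ 0 := DH_g_ne_zero hgp hp2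
  rw [DH_D1_alt]
  constructor
  · intro hc
    rw [Finset.mem_image] at hc
    obtain ⟨⟨t, i⟩, _, rfl⟩ := hc
    constructor
    · rw [map_mul, map_pow, map_pow, map_natCast, map_natCast, hxp]
      exact mul_ne_zero (pow_ne_zero _ hgnep) (pow_ne_zero _ hgnep)
    · refine ⟨t, ?_⟩
      rw [map_mul, map_pow, map_pow, map_natCast, map_natCast, hxq, one_pow, mul_one]
  · rintro ⟨h1, b, hb⟩
    obtain ⟨a, ha⟩ := DH_gen hgp h1
    obtain ⟨t, htlt, i, hilt, hc⟩ := DH_repr hp hq hpo hqo hpq hgcd hgp hgq hxp hxq 1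
      le_rfl ha hb
    rw [Finset.mem_image]
    exact ⟨(t, i), by simp [Finset.mem_product, htlt, hilt], by rw [hc]⟩


lemma DH_hom_val {n : ℕ} [NeZero n] {R : Type*} [Ring R] (f : ZMod n →+* R) (c : ZMod n) :
    f c = ((c.val : ℕ) : R) := by
  conv_lhs => rw [show c = ((c.val : ℕ) : ZMod n) by rw [ZMod.natCast_val, ZMod.cast_id]]
  rw [map_natCast]

lemma DH_P_iff (hp : Nat.Prime p) (hq : Nat.Prime q) (hpq : p < q) (c : ZMod (p * q)) :
    c ∈ DHP p q ↔ DHpip p q c = 0 ∧ DHpiq p q c ≠ 0 := by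
  haveI : Fact p.Prime := ⟨hp⟩
  haveI : Fact q.Prime := ⟨hq⟩
  haveI : NeZero (p * q) := ⟨Nat.mul_ne_zero hp.ne_zero hq.ne_zero⟩
  have hp1 := hp.one_lt
  have hq1 := hq.one_lt
  have hpne : (p : ZMod q) ≠ 0 := by
    rw [Ne, ZMod.natCast_eq_zero_iff]
    intro hd
    exact absurd (Nat.le_of_dvd (by omega) hd) (by omega)
  constructor
  · intro hc
    rw [DHP, Finset.mem_image] at hc
    obtain ⟨k, hk, rfl⟩ := hc
    rw [Finset.mem_Icc] at hk
    constructor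
    · rw [map_natCast, Nat.cast_mul, ZMod.natCast_self, mul_zero]
    · rw [map_natCast, Nat.cast_mul]
      refine mul_ne_zero ?_ hpne
      rw [Ne, ZMod.natCast_eq_zero_iff]
      intro hd
      exact absurd (Nat.le_of_dvd (by omega) hd) (by omega)
  · rintro ⟨h1, h2⟩
    rw [DH_hom_val, ZMod.natCast_eq_zero_iff] at h1
    have hv0 : c.val ≠ 0 := by
      intro h
      rw [DH_hom_val, h, Nat.cast_zero] at h2
      exact h2 rfl
    obtain ⟨k, hk⟩ := h1
    have hlt : c.val < p * q := ZMod.val_lt c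
    have hk1 : 1 ≤ k := Nat.pos_of_ne_zero (fun h => hv0 (by rw [hk, h, Nat.mul_zero]))
    have hkq : k ≤ q - 1 := by
      have hlt2 : p * k < p * q := by omega
      have := Nat.lt_of_mul_lt_mul_left hlt2
      omega
    rw [DHP, Finset.mem_image]
    refine ⟨k, Finset.mem_Icc.mpr ⟨hk1, hkq⟩, ?_⟩
    have : c = ((c.val : ℕ) : ZMod (p * q)) := by rw [ZMod.natCast_val, ZMod.cast_id]
    rw [this, hk, Nat.mul_comm p k]

lemma DH_Q_iff (hp : Nat.Prime p) (hq : Nat.Prime q) (hpq : p < q) (c : ZMod (p * q)) :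
    c ∈ DHQ p q ↔ DHpiq p q c = 0 ∧ DHpip p q c ≠ 0 := by
  haveI : Fact p.Prime := ⟨hp⟩
  haveI : Fact q.Prime := ⟨hq⟩
  haveI : NeZero (p * q) := ⟨Nat.mul_ne_zero hp.ne_zero hq.ne_zero⟩
  have hp1 := hp.one_lt
  have hq1 := hq.one_lt
  have hqne : (q : ZMod p) ≠ 0 := by
    rw [Ne, ZMod.natCast_eq_zero_iff]
    intro hd
    rcases (Nat.Prime.eq_one_or_self_of_dvd hq p hd) with h | h <;> omega
  constructor
  · intro hc
    rw [DHQ, Finset.mem_image] at hc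
    obtain ⟨k, hk, rfl⟩ := hc
    rw [Finset.mem_Icc] at hk
    constructor
    · rw [map_natCast, Nat.cast_mul, ZMod.natCast_self, mul_zero]
    · rw [map_natCast, Nat.cast_mul]
      refine mul_ne_zero ?_ hqne
      rw [Ne, ZMod.natCast_eq_zero_iff]
      intro hd
      exact absurd (Nat.le_of_dvd (by omega) hd) (by omega)
  · rintro ⟨h1, h2⟩
    rw [DH_hom_val, ZMod.natCast_eq_zero_iff] at h1
    have hv0 : c.val ≠ 0 := by
      intro h
      rw [DH_hom_val, h, Nat.cast_zero] at h2
      exact h2 rfl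
    obtain ⟨k, hk⟩ := h1
    have hlt : c.val < p * q := ZMod.val_lt c
    have hk1 : 1 ≤ k := Nat.pos_of_ne_zero (fun h => hv0 (by rw [hk, h, Nat.mul_zero]))
    have hkp : k ≤ p - 1 := by
      have hlt2 : q * k < q * p := by rw [Nat.mul_comm q p]; omega
      have := Nat.lt_of_mul_lt_mul_left hlt2
      omega
    rw [DHQ, Finset.mem_image]
    refine ⟨k, Finset.mem_Icc.mpr ⟨hk1, hkp⟩, ?_⟩
    have : c = ((c.val : ℕ) : ZMod (p * q)) := by rw [ZMod.natCast_val, ZMod.cast_id]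
    rw [this, hk, Nat.mul_comm q k]

lemma DH_isUnit (hp : Nat.Prime p) (hq : Nat.Prime q) {c : ZMod (p * q)}
    (h1 : DHpip p q c ≠ 0) (h2 : DHpiq p q c ≠ 0) : IsUnit c := by
  haveI : NeZero (p * q) := ⟨Nat.mul_ne_zero hp.ne_zero hq.ne_zero⟩
  have hc : c = ((c.val : ℕ) : ZMod (p * q)) := by rw [ZMod.natCast_val, ZMod.cast_id]
  rw [hc]
  rw [ZMod.isUnit_iff_coprime]
  refine Nat.Coprime.mul_right ?_ ?_
  · rw [Nat.coprime_comm]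
    refine (hp.coprime_iff_not_dvd).mpr ?_
    intro hd
    exact h1 (by rw [DH_hom_val, ZMod.natCast_eq_zero_iff]; exact hd)
  · rw [Nat.coprime_comm]
    refine (hq.coprime_iff_not_dvd).mpr ?_
    intro hd
    exact h2 (by rw [DH_hom_val, ZMod.natCast_eq_zero_iff]; exact hd)


lemma DH_image_eq {n : ℕ} {a : ZMod n} (ha : IsUnit a) {S T : Finset (ZMod n)}
    (hsub : Finset.image (a * ·) S ⊆ T) (hcard : T.card ≤ S.card) :
    Finset.image (a * ·) S = T :=
  Finset.eq_of_subset_of_card_le hsub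
    (by rw [Finset.card_image_of_injective _ ha.mul_right_injective]; exact hcard)

lemma DH_g_unit (hp : Nat.Prime p) (hq : Nat.Prime q)
    (hgp : orderOf (g : ZMod p) = p - 1) (hgq : orderOf (g : ZMod q) = q - 1) :
    IsUnit (g : ZMod (p * q)) := by
  haveI : Fact p.Prime := ⟨hp⟩
  haveI : Fact q.Prime := ⟨hq⟩
  refine DH_isUnit hp hq ?_ ?_
  · rw [map_natCast]; exact DH_g_ne_zero hgp hp.two_le
  · rw [map_natCast]; exact DH_g_ne_zero hgq hq.two_le

lemma DH_card_D1 (hp : Nat.Prime p) (hq : Nat.Prime q)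
    (hgp : orderOf (g : ZMod p) = p - 1) (hgq : orderOf (g : ZMod q) = q - 1) :
    (DHD1 p q g x).card = (DHD0 p q g x).card := by
  rw [DHD1, Finset.card_image_of_injective _ (DH_g_unit hp hq hgp hgq).mul_right_injective]

lemma DH_mul_D1_D1 (hp : Nat.Prime p) (hq : Nat.Prime q) (hpo : Odd p) (hqo : Odd q)
    (hpq : p < q) (hgcd : Nat.gcd (p - 1) (q - 1) = 2)
    (hgp : orderOf (g : ZMod p) = p - 1) (hgq : orderOf (g : ZMod q) = q - 1)
    (hxp : (x : ZMod p) = (g : ZMod p)) (hxq : (x : ZMod q) = 1)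
    {a : ZMod (p * q)} (ha : a ∈ DHD0 p q g x) :
    (DHD1 p q g x).image (a * ·) = DHD1 p q g x := by
  haveI : Fact p.Prime := ⟨hp⟩
  haveI : Fact q.Prime := ⟨hq⟩
  have hgq0 : (g : ZMod q) ≠ 0 := DH_g_ne_zero hgq hq.two_le
  obtain ⟨hap, b1, hb1⟩ := (DH_D0_iff hp hq hpo hqo hpq hgcd hgp hgq hxp hxq a).mp ha
  have hau : IsUnit a := DH_isUnit hp hq hap (by rw [hb1]; exact pow_ne_zero _ hgq0)
  refine DH_image_eq hau ?_ le_rfl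
  intro y hy
  rw [Finset.mem_image] at hy
  obtain ⟨c, hc, rfl⟩ := hy
  obtain ⟨hcp, b2, hb2⟩ := (DH_D1_iff hp hq hpo hqo hpq hgcd hgp hgq hxp hxq c).mp hc
  rw [DH_D1_iff hp hq hpo hqo hpq hgcd hgp hgq hxp hxq]
  refine ⟨by rw [map_mul]; exact mul_ne_zero hap hcp, b1 + b2, ?_⟩
  rw [map_mul, hb1, hb2, ← pow_add]
  congr 1
  ring

lemma DH_mul_D1_D0 (hp : Nat.Prime p) (hq : Nat.Prime q) (hpo : Odd p) (hqo : Odd q)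
    (hpq : p < q) (hgcd : Nat.gcd (p - 1) (q - 1) = 2)
    (hgp : orderOf (g : ZMod p) = p - 1) (hgq : orderOf (g : ZMod q) = q - 1)
    (hxp : (x : ZMod p) = (g : ZMod p)) (hxq : (x : ZMod q) = 1)
    {a : ZMod (p * q)} (ha : a ∈ DHD1 p q g x) :
    (DHD1 p q g x).image (a * ·) = DHD0 p q g x := by
  haveI : Fact p.Prime := ⟨hp⟩
  haveI : Fact q.Prime := ⟨hq⟩
  have hgq0 : (g : ZMod q) ≠ 0 := DH_g_ne_zero hgq hq.two_le
  obtain ⟨hap, b1, hb1⟩ := (DH_D1_iff hp hq hpo hqo hpq hgcd hgp hgq hxp hxq a).mp ha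
  have hau : IsUnit a := DH_isUnit hp hq hap (by rw [hb1]; exact pow_ne_zero _ hgq0)
  refine DH_image_eq hau ?_ (le_of_eq (DH_card_D1 hp hq hgp hgq).symm)
  intro y hy
  rw [Finset.mem_image] at hy
  obtain ⟨c, hc, rfl⟩ := hy
  obtain ⟨hcp, b2, hb2⟩ := (DH_D1_iff hp hq hpo hqo hpq hgcd hgp hgq hxp hxq c).mp hc
  rw [DH_D0_iff hp hq hpo hqo hpq hgcd hgp hgq hxp hxq]
  refine ⟨by rw [map_mul]; exact mul_ne_zero hap hcp, b1 + b2 + 1, ?_⟩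
  rw [map_mul, hb1, hb2, ← pow_add]
  congr 1
  ring

lemma DH_mul_P (hp : Nat.Prime p) (hq : Nat.Prime q) (hpq : p < q)
    {a : ZMod (p * q)} (hap : DHpip p q a ≠ 0) (haq : DHpiq p q a ≠ 0) :
    (DHP p q).image (a * ·) = DHP p q := by
  haveI : Fact p.Prime := ⟨hp⟩
  haveI : Fact q.Prime := ⟨hq⟩
  have hau : IsUnit a := DH_isUnit hp hq hap haq
  refine DH_image_eq hau ?_ le_rfl
  intro y hy
  rw [Finset.mem_image] at hy
  obtain ⟨c, hc, rfl⟩ := hy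
  obtain ⟨hcp, hcq⟩ := (DH_P_iff hp hq hpq c).mp hc
  rw [DH_P_iff hp hq hpq]
  exact ⟨by rw [map_mul, hcp, mul_zero], by rw [map_mul]; exact mul_ne_zero haq hcq⟩


lemma DH_xi_prim (hp : Nat.Prime p) (hq : Nat.Prime q) :
    IsPrimitiveRoot (DHxi (p * q)) (p * q) := by
  rw [DHxi]
  exact Complex.isPrimitiveRoot_exp _ (Nat.mul_ne_zero hp.ne_zero hq.ne_zero)

lemma DH_zero_notmem_P (hp : Nat.Prime p) (hq : Nat.Prime q) (hpq : p < q) :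
    (0 : ZMod (p * q)) ∉ DHP p q := by
  intro h
  exact ((DH_P_iff hp hq hpq 0).mp h).2 (map_zero _)

lemma DH_insert_P (hp : Nat.Prime p) (hq : Nat.Prime q) :
    insert (0 : ZMod (p * q)) (DHP p q) =
      (Finset.range q).image (fun k => ((k * p : ℕ) : ZMod (p * q))) := by
  have hq2 := hq.two_le
  ext c
  rw [Finset.mem_insert, DHP, Finset.mem_image, Finset.mem_image]
  constructor
  · rintro (rfl | ⟨k, hk, rfl⟩)
    · exact ⟨0, Finset.mem_range.mpr (by omega), by norm_num⟩
    · rw [Finset.mem_Icc] at hk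
      exact ⟨k, Finset.mem_range.mpr (by omega), rfl⟩
  · rintro ⟨k, hk, rfl⟩
    rw [Finset.mem_range] at hk
    rcases Nat.eq_zero_or_pos k with rfl | hk1
    · left; norm_num
    · right; exact ⟨k, Finset.mem_Icc.mpr ⟨hk1, by omega⟩, rfl⟩

lemma DH_insert_Q (hp : Nat.Prime p) (hq : Nat.Prime q) :
    insert (0 : ZMod (p * q)) (DHQ p q) =
      (Finset.range p).image (fun k => ((k * q : ℕ) : ZMod (p * q))) := by
  have hp2 := hp.two_le
  ext c
  rw [Finset.mem_insert, DHQ, Finset.mem_image, Finset.mem_image]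
  constructor
  · rintro (rfl | ⟨k, hk, rfl⟩)
    · exact ⟨0, Finset.mem_range.mpr (by omega), by norm_num⟩
    · rw [Finset.mem_Icc] at hk
      exact ⟨k, Finset.mem_range.mpr (by omega), rfl⟩
  · rintro ⟨k, hk, rfl⟩
    rw [Finset.mem_range] at hk
    rcases Nat.eq_zero_or_pos k with rfl | hk1
    · left; norm_num
    · right; exact ⟨k, Finset.mem_Icc.mpr ⟨hk1, by omega⟩, rfl⟩

lemma DH_sum_P (hp : Nat.Prime p) (hq : Nat.Prime q) (hpq : p < q) :
    ∑ c ∈ DHP p q, DHxi (p * q) ^ c.val = -1 := by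
  haveI : NeZero (p * q) := ⟨Nat.mul_ne_zero hp.ne_zero hq.ne_zero⟩
  have hq1 := hq.one_lt
  have hp1 := hp.one_lt
  have hζ : IsPrimitiveRoot (DHxi (p * q) ^ p) q := (DH_xi_prim hp hq).pow
    (Nat.mul_pos hp.pos hq.pos) rfl
  have hins : ∑ c ∈ insert (0 : ZMod (p * q)) (DHP p q), DHxi (p * q) ^ c.val = 0 := by
    have hklt : ∀ {k : ℕ}, k < q → k * p < p * q := by
      intro k hk
      calc k * p < q * p := (Nat.mul_lt_mul_right hp.pos).mpr hk
      _ = p * q := Nat.mul_comm q p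
    rw [DH_insert_P hp hq, Finset.sum_image ?inj]
    case inj =>
      intro k1 h1 k2 h2 he
      rw [Finset.mem_coe, Finset.mem_range] at h1 h2
      have e1 := congrArg ZMod.val he
      rw [ZMod.val_natCast_of_lt (hklt h1), ZMod.val_natCast_of_lt (hklt h2)] at e1
      exact Nat.eq_of_mul_eq_mul_right hp.pos e1
    have hterm : ∀ k ∈ Finset.range q,
        DHxi (p * q) ^ (((k * p : ℕ) : ZMod (p * q)).val) = (DHxi (p * q) ^ p) ^ k := by
      intro k hk
      rw [Finset.mem_range] at hk
      rw [ZMod.val_natCast_of_lt (hklt hk), pow_mul']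
    rw [Finset.sum_congr rfl hterm]
    exact hζ.geom_sum_eq_zero hq1
  rw [Finset.sum_insert (DH_zero_notmem_P hp hq hpq)] at hins
  rw [ZMod.val_zero, pow_zero] at hins
  linear_combination hins

lemma DH_zero_notmem_Q (hp : Nat.Prime p) (hq : Nat.Prime q) (hpq : p < q) :
    (0 : ZMod (p * q)) ∉ DHQ p q := by
  intro h
  exact ((DH_Q_iff hp hq hpq 0).mp h).2 (map_zero _)

lemma DH_sum_Q (hp : Nat.Prime p) (hq : Nat.Prime q) (hpq : p < q) :
    ∑ c ∈ DHQ p q, DHxi (p * q) ^ c.val = -1 := by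
  haveI : NeZero (p * q) := ⟨Nat.mul_ne_zero hp.ne_zero hq.ne_zero⟩
  have hq1 := hq.one_lt
  have hp1 := hp.one_lt
  have hζ : IsPrimitiveRoot (DHxi (p * q) ^ q) p := (DH_xi_prim hp hq).pow
    (Nat.mul_pos hp.pos hq.pos) (Nat.mul_comm p q)
  have hins : ∑ c ∈ insert (0 : ZMod (p * q)) (DHQ p q), DHxi (p * q) ^ c.val = 0 := by
    have hklt : ∀ {k : ℕ}, k < p → k * q < p * q := by
      intro k hk
      exact (Nat.mul_lt_mul_right hq.pos).mpr hk
    rw [DH_insert_Q hp hq, Finset.sum_image ?inj]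
    case inj =>
      intro k1 h1 k2 h2 he
      rw [Finset.mem_coe, Finset.mem_range] at h1 h2
      have e1 := congrArg ZMod.val he
      rw [ZMod.val_natCast_of_lt (hklt h1), ZMod.val_natCast_of_lt (hklt h2)] at e1
      exact Nat.eq_of_mul_eq_mul_right hq.pos e1
    have hterm : ∀ k ∈ Finset.range p,
        DHxi (p * q) ^ (((k * q : ℕ) : ZMod (p * q)).val) = (DHxi (p * q) ^ q) ^ k := by
      intro k hk
      rw [Finset.mem_range] at hk
      rw [ZMod.val_natCast_of_lt (hklt hk), pow_mul']
    rw [Finset.sum_congr rfl hterm]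
    exact hζ.geom_sum_eq_zero hp1
  rw [Finset.sum_insert (DH_zero_notmem_Q hp hq hpq)] at hins
  rw [ZMod.val_zero, pow_zero] at hins
  linear_combination hins


lemma DH_sum_univ [NeZero (p * q)] (hp : Nat.Prime p) (hq : Nat.Prime q) :
    ∑ c : ZMod (p * q), DHxi (p * q) ^ c.val = 0 := by
  have hN1 : 1 < p * q := Nat.one_lt_mul_iff.mpr ⟨hp.pos, hq.pos, Or.inl hp.one_lt⟩
  have := (DH_xi_prim hp hq).geom_sum_eq_zero hN1
  rw [← this]
  refine Finset.sum_nbij' (fun c => c.val) (fun k => (k : ZMod (p * q))) ?_ ?_ ?_ ?_ ?_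
  · intro c _; exact Finset.mem_range.mpr (ZMod.val_lt c)
  · intro k _; exact Finset.mem_univ _
  · intro c _; show ((c.val : ℕ) : ZMod (p * q)) = c; rw [ZMod.natCast_val, ZMod.cast_id]
  · intro k hk; show ((k : ZMod (p * q))).val = k
    rw [ZMod.val_natCast_of_lt (Finset.mem_range.mp hk)]
  · intro c _; rfl

lemma DH_disj_D0_D1 (hp : Nat.Prime p) (hq : Nat.Prime q) (hpo : Odd p) (hqo : Odd q)
    (hpq : p < q) (hgcd : Nat.gcd (p - 1) (q - 1) = 2)
    (hgp : orderOf (g : ZMod p) = p - 1) (hgq : orderOf (g : ZMod q) = q - 1)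
    (hxp : (x : ZMod p) = (g : ZMod p)) (hxq : (x : ZMod q) = 1) :
    Disjoint (DHD0 p q g x) (DHD1 p q g x) := by
  haveI : Fact q.Prime := ⟨hq⟩
  rw [Finset.disjoint_left]
  intro c h0 h1
  obtain ⟨_, b0, hb0⟩ := (DH_D0_iff hp hq hpo hqo hpq hgcd hgp hgq hxp hxq c).mp h0
  obtain ⟨_, b1, hb1⟩ := (DH_D1_iff hp hq hpo hqo hpq hgcd hgp hgq hxp hxq c).mp h1
  have heq : (g : ZMod q) ^ (2 * b0) = (g : ZMod q) ^ (2 * b1 + 1) := by rw [← hb0, ← hb1]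
  have hmod := DH_pow_modEq hgq hq.two_le heq
  obtain ⟨kq, hkq⟩ := hqo
  have h2 : (2 : ℕ) ∣ q - 1 := ⟨kq, by omega⟩
  have := hmod.of_dvd h2
  have h3 : (2 * b0) % 2 = (2 * b1 + 1) % 2 := this
  omega

lemma DH_partition [NeZero (p * q)] (hp : Nat.Prime p) (hq : Nat.Prime q) (hpo : Odd p) (hqo : Odd q)
    (hpq : p < q) (hgcd : Nat.gcd (p - 1) (q - 1) = 2)
    (hgp : orderOf (g : ZMod p) = p - 1) (hgq : orderOf (g : ZMod q) = q - 1)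
    (hxp : (x : ZMod p) = (g : ZMod p)) (hxq : (x : ZMod q) = 1) :
    ((DHD0 p q g x ∪ DHD1 p q g x) ∪ insert (0 : ZMod (p * q)) (DHP p q)) ∪ DHQ p q =
      Finset.univ := by
  haveI : Fact p.Prime := ⟨hp⟩
  haveI : Fact q.Prime := ⟨hq⟩
  apply Finset.eq_univ_iff_forall.mpr
  intro c
  rw [Finset.mem_union, Finset.mem_union, Finset.mem_union, Finset.mem_insert]
  by_cases h1 : DHpip p q c = 0
  · by_cases h2 : DHpiq p q c = 0
    · refine Or.inl (Or.inr (Or.inl ?_))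
      exact DH_inj hp hq hpq.ne (by rw [h1, map_zero]) (by rw [h2, map_zero])
    · exact Or.inl (Or.inr (Or.inr ((DH_P_iff hp hq hpq c).mpr ⟨h1, h2⟩)))
  · by_cases h2 : DHpiq p q c = 0
    · exact Or.inr ((DH_Q_iff hp hq hpq c).mpr ⟨h2, h1⟩)
    · obtain ⟨s, hs⟩ := DH_gen hgq h2
      rcases Nat.even_or_odd s with ⟨m, hm⟩ | ⟨m, hm⟩
      · refine Or.inl (Or.inl (Or.inl ?_))
        rw [DH_D0_iff hp hq hpo hqo hpq hgcd hgp hgq hxp hxq]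
        exact ⟨h1, m, by rw [hs, hm]; congr 1; ring⟩
      · refine Or.inl (Or.inl (Or.inr ?_))
        rw [DH_D1_iff hp hq hpo hqo hpq hgcd hgp hgq hxp hxq]
        exact ⟨h1, m, by rw [hs, hm]⟩

lemma DH_eta_sum (hp : Nat.Prime p) (hq : Nat.Prime q) (hpo : Odd p) (hqo : Odd q)
    (hpq : p < q) (hgcd : Nat.gcd (p - 1) (q - 1) = 2)
    (hgp : orderOf (g : ZMod p) = p - 1) (hgq : orderOf (g : ZMod q) = q - 1)
    (hxp : (x : ZMod p) = (g : ZMod p)) (hxq : (x : ZMod q) = 1) :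
    DHeta (p * q) (DHD0 p q g x) + DHeta (p * q) (DHD1 p q g x) = 1 := by
  haveI : Fact p.Prime := ⟨hp⟩
  haveI : Fact q.Prime := ⟨hq⟩
  haveI : NeZero (p * q) := ⟨Nat.mul_ne_zero hp.ne_zero hq.ne_zero⟩
  have hgq0 : (g : ZMod q) ≠ 0 := DH_g_ne_zero hgq hq.two_le
  have hgp0 : (g : ZMod p) ≠ 0 := DH_g_ne_zero hgp hp.two_le
  -- disjointness facts
  have hd01 := DH_disj_D0_D1 hp hq hpo hqo hpq hgcd hgp hgq hxp hxq
  have hpipD : ∀ c, c ∈ DHD0 p q g x ∪ DHD1 p q g x → DHpip p q c ≠ 0 := by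
    intro c hc
    rcases Finset.mem_union.mp hc with h | h
    · exact ((DH_D0_iff hp hq hpo hqo hpq hgcd hgp hgq hxp hxq c).mp h).1
    · exact ((DH_D1_iff hp hq hpo hqo hpq hgcd hgp hgq hxp hxq c).mp h).1
  have hpiqD : ∀ c, c ∈ DHD0 p q g x ∪ DHD1 p q g x → DHpiq p q c ≠ 0 := by
    intro c hc
    rcases Finset.mem_union.mp hc with h | h
    · obtain ⟨_, b, hb⟩ := (DH_D0_iff hp hq hpo hqo hpq hgcd hgp hgq hxp hxq c).mp h
      rw [hb]; exact pow_ne_zero _ hgq0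
    · obtain ⟨_, b, hb⟩ := (DH_D1_iff hp hq hpo hqo hpq hgcd hgp hgq hxp hxq c).mp h
      rw [hb]; exact pow_ne_zero _ hgq0
  have hdUP : Disjoint (DHD0 p q g x ∪ DHD1 p q g x) (insert (0 : ZMod (p * q)) (DHP p q)) := by
    rw [Finset.disjoint_left]
    intro c hc hc'
    rcases Finset.mem_insert.mp hc' with rfl | hcP
    · exact hpipD 0 hc (map_zero _)
    · exact hpipD c hc ((DH_P_iff hp hq hpq c).mp hcP).1
  have hdQ : Disjoint ((DHD0 p q g x ∪ DHD1 p q g x) ∪ insert (0 : ZMod (p * q)) (DHP p q))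
      (DHQ p q) := by
    rw [Finset.disjoint_left]
    intro c hc hcQ
    obtain ⟨hq0, hp0⟩ := (DH_Q_iff hp hq hpq c).mp hcQ
    rcases Finset.mem_union.mp hc with h | h
    · exact hpiqD c h hq0
    · rcases Finset.mem_insert.mp h with rfl | hcP
      · exact hp0 (map_zero _)
      · exact hp0 ((DH_P_iff hp hq hpq c).mp hcP).1
  have htot := DH_sum_univ (p := p) (q := q) hp hq
  rw [← DH_partition hp hq hpo hqo hpq hgcd hgp hgq hxp hxq] at htot
  rw [Finset.sum_union hdQ, Finset.sum_union hdUP, Finset.sum_union hd01] at htot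
  rw [Finset.sum_insert (DH_zero_notmem_P hp hq hpq), ZMod.val_zero, pow_zero] at htot
  rw [DH_sum_P hp hq hpq, DH_sum_Q hp hq hpq] at htot
  rw [DHeta, DHeta]
  linear_combination htot


lemma DH_main (hp : Nat.Prime p) (hq : Nat.Prime q) (hpq : p < q)
    {a : ZMod (p * q)} (hap : DHpip p q a ≠ 0) (haq : DHpiq p q a ≠ 0)
    {T : Finset (ZMod (p * q))} (himg : (DHD1 p q g x).image (a * ·) = T)
    (hdTP : Disjoint T (DHP p q)) (hdDP : Disjoint (DHD1 p q g x) (DHP p q)) :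
    DHSval1 p q g x (DHxi (p * q) ^ a.val) = DHeta (p * q) T - 1 := by
  haveI : NeZero (p * q) := ⟨Nat.mul_ne_zero hp.ne_zero hq.ne_zero⟩
  have hau : IsUnit a := DH_isUnit hp hq hap haq
  have hxiN : DHxi (p * q) ^ (p * q) = 1 := (DH_xi_prim hp hq).pow_eq_one
  rw [DHSval1]
  have hterm : ∀ i ∈ Finset.range (p * q),
      (DHs1 p q g x i : ℂ) * (DHxi (p * q) ^ a.val) ^ i =
        (if (i : ZMod (p * q)) ∈ DHD1 p q g x ∪ DHP p q
          then DHxi (p * q) ^ ((a * (i : ZMod (p * q))).val) else 0) := by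
    intro i hi
    rw [Finset.mem_range] at hi
    rw [DHs1]
    split_ifs with h
    · rw [Nat.cast_one, one_mul, ← pow_mul]
      refine (DH_pow_eq_of_modEq hxiN ?_).symm
      rw [ZMod.val_mul, ZMod.val_natCast_of_lt hi]
      exact Nat.mod_modEq _ _
    · rw [Nat.cast_zero, zero_mul]
  rw [Finset.sum_congr rfl hterm]
  have hstep2 : ∑ i ∈ Finset.range (p * q),
      (if (i : ZMod (p * q)) ∈ DHD1 p q g x ∪ DHP p q
        then DHxi (p * q) ^ ((a * (i : ZMod (p * q))).val) else 0) =
      ∑ c : ZMod (p * q),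
      (if c ∈ DHD1 p q g x ∪ DHP p q then DHxi (p * q) ^ ((a * c).val) else 0) := by
    refine Finset.sum_nbij' (fun i => ((i : ℕ) : ZMod (p * q))) (fun c => c.val) ?_ ?_ ?_ ?_ ?_
    · intro i _; exact Finset.mem_univ _
    · intro c _; exact Finset.mem_range.mpr (ZMod.val_lt c)
    · intro i hi; show ((i : ZMod (p * q))).val = i
      rw [ZMod.val_natCast_of_lt (Finset.mem_range.mp hi)]
    · intro c _; show ((c.val : ℕ) : ZMod (p * q)) = c; rw [ZMod.natCast_val, ZMod.cast_id]
    · intro i _; rfl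
  rw [hstep2, Finset.sum_ite_mem, Finset.univ_inter]
  have hstep3 : ∑ c ∈ DHD1 p q g x ∪ DHP p q, DHxi (p * q) ^ ((a * c).val) =
      ∑ d ∈ (DHD1 p q g x ∪ DHP p q).image (a * ·), DHxi (p * q) ^ d.val := by
    rw [Finset.sum_image (fun c _ c' _ h => hau.mul_right_injective h)]
  rw [hstep3, Finset.image_union, himg, DH_mul_P hp hq hpq hap haq,
    Finset.sum_union hdTP, DH_sum_P hp hq hpq, DHeta]
  ring

theorem DH_stmt8 (hp : Nat.Prime p) (hq : Nat.Prime q)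
    (hpo : Odd p) (hqo : Odd q) (hpq : p < q)
    (hgcd : Nat.gcd (p - 1) (q - 1) = 2)
    (hgp : orderOf (g : ZMod p) = p - 1) (hgq : orderOf (g : ZMod q) = q - 1)
    (hxp : (x : ZMod p) = (g : ZMod p)) (hxq : (x : ZMod q) = 1) :
    (∀ a ∈ DHD0 p q g x,
      DHSval1 p q g x (DHxi (p * q) ^ a.val) = -DHeta (p * q) (DHD0 p q g x)) ∧
    (∀ a ∈ DHD1 p q g x,
      DHSval1 p q g x (DHxi (p * q) ^ a.val) = -DHeta (p * q) (DHD1 p q g x)) := by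
  haveI : Fact p.Prime := ⟨hp⟩
  haveI : Fact q.Prime := ⟨hq⟩
  haveI : NeZero (p * q) := ⟨Nat.mul_ne_zero hp.ne_zero hq.ne_zero⟩
  have hgq0 : (g : ZMod q) ≠ 0 := DH_g_ne_zero hgq hq.two_le
  have hsum := DH_eta_sum hp hq hpo hqo hpq hgcd hgp hgq hxp hxq
  have hdDP : Disjoint (DHD1 p q g x) (DHP p q) := by
    rw [Finset.disjoint_left]
    intro c hc hc'
    exact ((DH_D1_iff hp hq hpo hqo hpq hgcd hgp hgq hxp hxq c).mp hc).1
      ((DH_P_iff hp hq hpq c).mp hc').1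
  have hdD0P : Disjoint (DHD0 p q g x) (DHP p q) := by
    rw [Finset.disjoint_left]
    intro c hc hc'
    exact ((DH_D0_iff hp hq hpo hqo hpq hgcd hgp hgq hxp hxq c).mp hc).1
      ((DH_P_iff hp hq hpq c).mp hc').1
  constructor
  · intro a ha
    obtain ⟨hap, b, hb⟩ := (DH_D0_iff hp hq hpo hqo hpq hgcd hgp hgq hxp hxq a).mp ha
    have haq : DHpiq p q a ≠ 0 := by rw [hb]; exact pow_ne_zero _ hgq0
    have h := DH_main hp hq hpq hap haq
      (DH_mul_D1_D1 hp hq hpo hqo hpq hgcd hgp hgq hxp hxq ha) hdDP hdDP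
    rw [h]
    linear_combination hsum
  · intro a ha
    obtain ⟨hap, b, hb⟩ := (DH_D1_iff hp hq hpo hqo hpq hgcd hgp hgq hxp hxq a).mp ha
    have haq : DHpiq p q a ≠ 0 := by rw [hb]; exact pow_ne_zero _ hgq0
    have h := DH_main hp hq hpq hap haq
      (DH_mul_D1_D0 hp hq hpo hqo hpq hgcd hgp hgq hxp hxq ha) hdD0P hdDP
    rw [h]
    linear_combination hsum

end Main

theorem stmt8 (p q g x : ℕ) (hp : Nat.Prime p) (hq : Nat.Prime q)
    (hpo : Odd p) (hqo : Odd q) (hpq : p < q)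
    (hgcd : Nat.gcd (p - 1) (q - 1) = 2)
    (hgp : orderOf (g : ZMod p) = p - 1) (hgq : orderOf (g : ZMod q) = q - 1)
    (hxp : (x : ZMod p) = (g : ZMod p)) (hxq : (x : ZMod q) = 1) :
    (∀ a ∈ DHD0 p q g x,
      DHSval1 p q g x (DHxi (p * q) ^ a.val) = -DHeta (p * q) (DHD0 p q g x)) ∧
    (∀ a ∈ DHD1 p q g x,
      DHSval1 p q g x (DHxi (p * q) ^ a.val) = -DHeta (p * q) (DHD1 p q g x)) :=
  DH_stmt8 hp hq hpo hqo hpq hgcd hgp hgq hxp hxq
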